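/- Let g = ⊕_{i∈Z} g(i) be a Z-grading of a simple Lie algebra g induced by a simple root α (so g(0) is a maximal Levi subalgebra with one-dimensional center). For any k ≥ 1, the subalgebra g^[k] = ⊕_{i∈Z} g(ki) is semisimple, and its root system relative to the common Cartan subalgebra t ⊆ g(0) is ⊔_{i∈Z} Δ_α(ki). -/

import Mathlib

open LieAlgebra LieModule

namespace GkAux

variable {L : Type*} [LieRing L] [LieAlgebra ℂ L] [FiniteDimensional ℂ L]

lemma indep_sum_zero {ι : Type*} {G : ι → Submodule ℂ L} (h : iSupIndep G)
    (s : Finset ι) (y : ι → L) (hy : ∀ i, y i ∈ G i) (hsum : ∑ i ∈ s, y i = 0) :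
    ∀ i ∈ s, y i = 0 := by
  classical
  intro i hi
  have h2 := Finset.add_sum_erase s y hi
  rw [hsum] at h2
  have h1 : y i = -∑ j ∈ s.erase i, y j := eq_neg_of_add_eq_zero_left h2
  have hmem : y i ∈ (⨆ (j) (_ : j ≠ i), G j : Submodule ℂ L) := by
    rw [h1]
    refine neg_mem (Submodule.sum_mem _ fun j hj => ?_)
    exact Submodule.mem_iSup_of_mem j <|
      Submodule.mem_iSup_of_mem (Finset.ne_of_mem_erase hj) (hy j)
  exact (Submodule.disjoint_def.mp (iSupIndep_def.mp h i)) _ (hy i) hmem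

/-- If all `A i ≤ G i`, `⨆ A = ⊤` and `G` independent, then `A i = G i`. -/
lemma refine_eq {ι : Type*} {G A : ι → Submodule ℂ L} (hind : iSupIndep G)
    (hle : ∀ i, A i ≤ G i) (htop : ⨆ i, A i = ⊤) (i : ι) : A i = G i := by
  refine le_antisymm (hle i) ?_
  have hsplit : A i ⊔ (⨆ (j) (_ : j ≠ i), A j) = (⊤ : Submodule ℂ L) := by
    rw [← htop]
    refine le_antisymm ?_ (iSup_le fun j => ?_)
    · exact sup_le (le_iSup A i) (iSup₂_le fun j _ => le_iSup A j)
    · by_cases hj : j = i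
      · subst hj; exact le_sup_left
      · exact le_trans (le_iSup₂ (f := fun (j) (_ : j ≠ i) => A j) j hj) le_sup_right
  have hbot : (⨆ (j) (_ : j ≠ i), A j) ⊓ G i = ⊥ := by
    rw [eq_bot_iff, inf_comm]
    refine le_trans (inf_le_inf_left _ (iSup₂_le fun j hj =>
      (hle j).trans (le_iSup₂ (f := fun (j) (_ : j ≠ i) => G j) j hj))) ?_
    exact (iSupIndep_def.mp hind i).le_bot
  calc G i = (A i ⊔ (⨆ (j) (_ : j ≠ i), A j)) ⊓ G i := by rw [hsplit, top_inf_eq]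
    _ = A i ⊔ ((⨆ (j) (_ : j ≠ i), A j) ⊓ G i) := sup_inf_assoc_of_le _ (hle i)
    _ = A i := by rw [hbot, sup_bot_eq]
    _ ≤ A i := le_rfl

end GkAux

set_option linter.unusedSectionVars false

namespace GkAux

variable {L : Type*} [LieRing L] [LieAlgebra ℂ L] [FiniteDimensional ℂ L]

lemma eigen_comp {G : ℤ → Submodule ℂ L} (hind : iSupIndep G)
    (h₀ : L) (hgrad : ∀ i : ℤ, ∀ x ∈ G i, ⁅h₀, x⁆ = (i : ℂ) • x)
    (T : Set ℤ) {x : L} (hx : x ∈ ⨆ i ∈ T, G i) {c : ℂ} (hc : ⁅h₀, x⁆ = c • x) :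
    x = 0 ∨ ∃ m ∈ T, ((m : ℂ) = c ∧ x ∈ G m) := by
  classical
  rw [Submodule.mem_iSup_iff_exists_finsupp] at hx
  obtain ⟨f, hf, hsum⟩ := hx
  have hfG : ∀ i, f i ∈ G i := by
    intro i
    by_cases hi : i ∈ T
    · have := hf i; rwa [iSup_pos hi] at this
    · have h := hf i; rw [iSup_neg hi] at h
      rw [(Submodule.mem_bot ℂ).mp h]; exact (G i).zero_mem
  have hfT : ∀ i, f i ≠ 0 → i ∈ T := by
    intro i hne
    by_contra hi
    have h := hf i; rw [iSup_neg hi] at h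
    exact hne ((Submodule.mem_bot ℂ).mp h)
  rw [Finsupp.sum] at hsum
  have hzero : ∑ i ∈ f.support, (((i : ℂ) - c) • f i) = 0 := by
    have h1 : ⁅h₀, x⁆ = ∑ i ∈ f.support, (i : ℂ) • f i := by
      rw [← hsum, ← LieAlgebra.ad_apply (R := ℂ) (x := h₀), map_sum]
      exact Finset.sum_congr rfl fun i _ => by
        rw [LieAlgebra.ad_apply]; exact hgrad i (f i) (hfG i)
    calc ∑ i ∈ f.support, (((i : ℂ) - c) • f i)
        = ∑ i ∈ f.support, ((i : ℂ) • f i - c • f i) :=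
          Finset.sum_congr rfl fun i _ => sub_smul _ _ _
      _ = (∑ i ∈ f.support, (i : ℂ) • f i) - ∑ i ∈ f.support, c • f i :=
          Finset.sum_sub_distrib _ _
      _ = ⁅h₀, x⁆ - c • x := by rw [h1, ← Finset.smul_sum, hsum]
      _ = 0 := by rw [hc, sub_self]
  have hcomp := indep_sum_zero hind f.support (fun i => ((i : ℂ) - c) • f i)
    (fun i => Submodule.smul_mem _ _ (hfG i)) hzero
  by_cases hall : ∀ i ∈ f.support, f i = 0
  · left; rw [← hsum]; exact Finset.sum_eq_zero hall
  · right
    push_neg at hall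
    obtain ⟨m, hm, hfm⟩ := hall
    have hmc : (m : ℂ) = c := by
      rcases smul_eq_zero.mp (hcomp m hm) with h | h
      · exact sub_eq_zero.mp h
      · exact absurd h hfm
    have hx_eq : x = f m := by
      rw [← hsum, ← Finset.add_sum_erase _ _ hm, Finset.sum_eq_zero, add_zero]
      intro i hi
      have hne : (i : ℂ) - c ≠ 0 := by
        rw [sub_ne_zero, ← hmc]
        exact_mod_cast fun h => (Finset.ne_of_mem_erase hi) (Int.cast_injective h)
      rcases smul_eq_zero.mp (hcomp i (Finset.mem_of_mem_erase hi)) with h | h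
      · exact absurd h hne
      · exact h
    exact ⟨m, hfT m hfm, hmc, hx_eq ▸ hfG m⟩

end GkAux

namespace GkAux

variable {L : Type*} [LieRing L] [LieAlgebra ℂ L] [FiniteDimensional ℂ L]

lemma eigen_comp_top {G : ℤ → Submodule ℂ L} (hdec : DirectSum.IsInternal G)
    (h₀ : L) (hgrad : ∀ i : ℤ, ∀ x ∈ G i, ⁅h₀, x⁆ = (i : ℂ) • x)
    {x : L} {c : ℂ} (hc : ⁅h₀, x⁆ = c • x) :
    x = 0 ∨ ∃ m : ℤ, ((m : ℂ) = c ∧ x ∈ G m) := by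
  have hx : x ∈ ⨆ i ∈ (Set.univ : Set ℤ), G i := by
    have h1 : (⨆ i ∈ (Set.univ : Set ℤ), G i) = ⨆ i, G i := by simp
    rw [h1, hdec.submodule_iSup_eq_top]; trivial
  simpa using eigen_comp hdec.submodule_iSupIndep h₀ hgrad Set.univ hx hc

lemma eigen_comp_k {G : ℤ → Submodule ℂ L} (hdec : DirectSum.IsInternal G)
    (h₀ : L) (hgrad : ∀ i : ℤ, ∀ x ∈ G i, ⁅h₀, x⁆ = (i : ℂ) • x) (k : ℤ)
    {x : L} (hx : x ∈ ⨆ i : ℤ, G (k * i)) {c : ℂ} (hc : ⁅h₀, x⁆ = c • x) :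
    x = 0 ∨ ∃ i : ℤ, (((k * i : ℤ) : ℂ) = c ∧ x ∈ G (k * i)) := by
  have hx' : x ∈ ⨆ m ∈ Set.range (fun i : ℤ => k * i), G m := by
    rwa [iSup_range] at *
  rcases eigen_comp hdec.submodule_iSupIndep h₀ hgrad _ hx' hc with h | ⟨m, ⟨i, rfl⟩, h1, h2⟩
  · exact Or.inl h
  · exact Or.inr ⟨i, h1, h2⟩

lemma killing_pair {G : ℤ → Submodule ℂ L} (hdec : DirectSum.IsInternal G)
    (hbr : ∀ i j : ℤ, ∀ x ∈ G i, ∀ y ∈ G j, ⁅x, y⁆ ∈ G (i + j))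
    {a b : ℤ} (hab : a + b ≠ 0) {x y : L} (hx : x ∈ G a) (hy : y ∈ G b) :
    killingForm ℂ L x y = 0 := by
  rw [killingForm_apply_apply]
  refine LinearMap.trace_eq_zero_of_mapsTo_ne hdec (fun c => a + b + c)
    (fun c => by show a + b + c ≠ c; omega) fun c z hz => ?_
  have h1 : ⁅x, ⁅y, z⁆⁆ ∈ G (a + (b + c)) := hbr _ _ x hx _ (hbr _ _ y hy z hz)
  have h2 : a + (b + c) = a + b + c := by ring
  rw [h2] at h1
  simpa only [LinearMap.comp_apply, LieAlgebra.ad_apply, SetLike.mem_coe] using h1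

lemma killing_h0_ne {G : ℤ → Submodule ℂ L} (hdec : DirectSum.IsInternal G)
    (h₀ : L) (hgrad : ∀ i : ℤ, ∀ x ∈ G i, ⁅h₀, x⁆ = (i : ℂ) • x)
    (k : ℤ) (hkne : k ≠ 0) (hGk : G k ≠ ⊥) : killingForm ℂ L h₀ h₀ ≠ 0 := by
  classical
  rw [killingForm_apply_apply]
  set f := (LieAlgebra.ad ℂ L h₀) ∘ₗ (LieAlgebra.ad ℂ L h₀) with hf
  have hfs : ∀ (i : ℤ), ∀ z ∈ G i, f z = ((i : ℂ) * (i : ℂ)) • z := by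
    intro i z hz
    have h1 := hgrad i z hz
    rw [hf]
    simp only [LinearMap.comp_apply, LieAlgebra.ad_apply, h1, lie_smul, h1, smul_smul]
  have hfmaps : ∀ i : ℤ, Set.MapsTo f (G i) (G i) := fun i z hz => by
    rw [SetLike.mem_coe, hfs i z hz]
    exact Submodule.smul_mem _ _ hz
  have hN : {i : ℤ | G i ≠ ⊥}.Finite :=
    WellFoundedGT.finite_ne_bot_of_iSupIndep hdec.submodule_iSupIndep
  rw [LinearMap.trace_eq_sum_trace_restrict' hdec hN hfmaps]
  have htr : ∀ i ∈ hN.toFinset, LinearMap.trace ℂ (G i) (f.restrict (hfmaps i))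
      = ((i ^ 2 * (Module.finrank ℂ (G i)) : ℤ) : ℂ) := by
    intro i _
    have hres : f.restrict (hfmaps i) = ((i : ℂ) * (i : ℂ)) • LinearMap.id := by
      ext z
      exact hfs i z z.2
    rw [hres, map_smul, LinearMap.trace_id, smul_eq_mul]
    push_cast
    ring
  rw [Finset.sum_congr rfl htr, ← Int.cast_sum]
  rw [Int.cast_ne_zero]
  have hpos : 0 < ∑ i ∈ hN.toFinset, i ^ 2 * (Module.finrank ℂ (G i) : ℤ) := by
    refine Finset.sum_pos' (fun i _ => by positivity) ⟨k, ?_, ?_⟩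
    · rwa [Set.Finite.mem_toFinset]
    · have hnt : Nontrivial (G k) := Submodule.nontrivial_iff_ne_bot.mpr hGk
      have hfr : 0 < Module.finrank ℂ (G k) := Module.finrank_pos
      have hk2 : (0 : ℤ) < k ^ 2 := by positivity
      exact mul_pos hk2 (by exact_mod_cast hfr)
  omega

lemma isKilling (h₀ : L) [LieAlgebra.IsSimple ℂ L]
    (hcontr : killingForm ℂ L h₀ h₀ ≠ 0) : LieAlgebra.IsKilling ℂ L := by
  constructor
  rcases LieAlgebra.IsSimple.eq_bot_or_eq_top (LieIdeal.killingCompl ℂ L ⊤) with h | h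
  · exact h
  · refine absurd ?_ hcontr
    have hmem : h₀ ∈ LieIdeal.killingCompl ℂ L ⊤ := by rw [h]; trivial
    exact (LieIdeal.mem_killingCompl ℂ L ⊤).mp hmem h₀ trivial

end GkAux

namespace GkAux

variable {L : Type*} [LieRing L] [LieAlgebra ℂ L] [FiniteDimensional ℂ L]

lemma killerNZ {G : ℤ → Submodule ℂ L} (hdec : DirectSum.IsInternal G)
    {t : LieSubalgebra ℂ L} [t.IsCartanSubalgebra] [LieAlgebra.IsKilling ℂ L]
    {h₀ : L} (hh₀t : h₀ ∈ t)
    (hgrad : ∀ i : ℤ, ∀ x ∈ G i, ⁅h₀, x⁆ = (i : ℂ) • x)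
    (k : ℕ)
    (S : Submodule ℂ L) (hSK : S ≤ ⨆ i : ℤ, G ((k : ℤ) * i))
    (hS2 : ∀ x ∈ S, ∀ y, y ∈ (⨆ i : ℤ, G ((k : ℤ) * i) : Submodule ℂ L) → ⁅y, x⁆ ∈ S)
    (hS3 : ∀ x ∈ S, ∀ y ∈ S, ⁅x, y⁆ = 0)
    {β : t → ℂ} (hβ : β ≠ 0) {x : L} (hx : x ∈ S) (hxr : x ∈ rootSpace t β) :
    x = 0 := by
  by_contra hx0
  set h₀' : t := ⟨h₀, hh₀t⟩ with hh₀'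
  have hβW : LieModule.genWeightSpace L β ≠ ⊥ := by
    intro h
    have hxr' : x ∈ LieModule.genWeightSpace L β := hxr
    exact hx0 ((LieSubmodule.mem_bot _).mp (h ▸ hxr'))
  set W : LieModule.Weight ℂ t L := ⟨β, hβW⟩ with hW
  have hWnz : W.IsNonZero := fun h => hβ h
  have hxeig : ⁅h₀, x⁆ = β h₀' • x :=
    LieAlgebra.IsKilling.lie_eq_smul_of_mem_rootSpace hxr h₀'
  rcases eigen_comp_k hdec h₀ hgrad (k : ℤ) (hSK hx) hxeig with h | ⟨i₀, hci, hxG⟩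
  · exact hx0 h
  -- find a Killing-pairing partner in the opposite root space
  have hex : ∃ y ∈ rootSpace t (-β), killingForm ℂ L x y ≠ 0 := by
    by_contra hall
    push_neg at hall
    have hker :=
      LieAlgebra.mem_ker_killingForm_of_mem_rootSpace_of_forall_rootSpace_neg
        ℂ L t (α := β) hxr hall
    rw [LieAlgebra.IsKilling.ker_killingForm_eq_bot] at hker
    exact hx0 ((Submodule.mem_bot ℂ).mp hker)
  obtain ⟨y, hyr, hyκ⟩ := hex
  have hy0 : y ≠ 0 := fun h => hyκ (by simp [h])
  have hyeig : ⁅h₀, y⁆ = (-(β h₀')) • y := by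
    have := LieAlgebra.IsKilling.lie_eq_smul_of_mem_rootSpace hyr h₀'
    simpa using this
  have hyG : y ∈ G ((k : ℤ) * (-i₀)) := by
    rcases eigen_comp_top hdec h₀ hgrad hyeig with h | ⟨m, hm, hyG⟩
    · exact absurd h hy0
    · have hm' : m = (k : ℤ) * (-i₀) := by
        have : (m : ℂ) = ((-(k * i₀) : ℤ) : ℂ) := by
          push_cast
          rw [hm, ← hci]
          push_cast
          ring
        have h5 := Int.cast_injective (α := ℂ) this
        rw [mul_neg]
        exact h5
      rwa [hm'] at hyG
  have hyK : y ∈ (⨆ i : ℤ, G ((k : ℤ) * i) : Submodule ℂ L) :=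
    le_iSup (fun i : ℤ => G ((k : ℤ) * i)) (-i₀) hyG
  -- the bracket ⁅x, y⁆ lands in S and acts on x with nonzero eigenvalue
  have hbrxy : ⁅x, y⁆ = killingForm ℂ L x y • ((LieAlgebra.IsKilling.cartanEquivDual t).symm W : L) :=
    LieAlgebra.IsKilling.lie_eq_killingForm_smul_of_mem_rootSpace_of_mem_rootSpace_neg
      (α := W) hxr hyr
  have hhS : ⁅x, y⁆ ∈ S := by
    have h1 := hS2 x hx y hyK
    have h2 : ⁅x, y⁆ = -⁅y, x⁆ := by rw [lie_skew]
    rw [h2]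
    exact S.neg_mem h1
  have hzero : ⁅⁅x, y⁆, x⁆ = 0 := hS3 _ hhS x hx
  set u : t := (LieAlgebra.IsKilling.cartanEquivDual t).symm W with hu
  have hβu : β u ≠ 0 := LieAlgebra.IsKilling.root_apply_cartanEquivDual_symm_ne_zero hWnz
  have hcalc : ⁅⁅x, y⁆, x⁆ = killingForm ℂ L x y • (β u • x) := by
    rw [hbrxy, smul_lie]
    congr 1
    exact LieAlgebra.IsKilling.lie_eq_smul_of_mem_rootSpace hxr u
  rw [hzero] at hcalc
  rcases smul_eq_zero.mp hcalc.symm with h | h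
  · exact hyκ h
  rcases smul_eq_zero.mp h with h | h
  · exact hβu h
  · exact hx0 h

end GkAux

namespace GkAux

variable {L : Type*} [LieRing L] [LieAlgebra ℂ L] [FiniteDimensional ℂ L]

lemma exists_ne_zero_mem {M : Type*} [AddCommGroup M] [Module ℂ M]
    {S : Submodule ℂ M} (hS : S ≠ ⊥) : ∃ v ∈ S, v ≠ 0 := by
  by_contra hall
  push_neg at hall
  exact hS (by
    rw [eq_bot_iff]
    intro v hv
    rw [Submodule.mem_bot]
    exact hall v hv)

lemma no_abelian {G : ℤ → Submodule ℂ L} (hdec : DirectSum.IsInternal G)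
    {t : LieSubalgebra ℂ L} [t.IsCartanSubalgebra] [LieAlgebra.IsKilling ℂ L]
    (ht0 : t.toSubmodule ≤ G 0)
    {h₀ : L} (hh₀t : h₀ ∈ t)
    (hgrad : ∀ i : ℤ, ∀ x ∈ G i, ⁅h₀, x⁆ = (i : ℂ) • x)
    (hcen : ∀ x ∈ G 0, (∀ y ∈ G 0, ⁅x, y⁆ = 0) → ∃ c : ℂ, x = c • h₀)
    (k : ℕ) (hk : 1 ≤ k) (hGk : G (k : ℤ) ≠ ⊥)
    (S : Submodule ℂ L) (hSK : S ≤ ⨆ i : ℤ, G ((k : ℤ) * i))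
    (hS2 : ∀ x ∈ S, ∀ y, y ∈ (⨆ i : ℤ, G ((k : ℤ) * i) : Submodule ℂ L) → ⁅y, x⁆ ∈ S)
    (hS3 : ∀ x ∈ S, ∀ y ∈ S, ⁅x, y⁆ = 0)
    (hSne : S ≠ ⊥) : False := by
  classical
  set h₀' : t := ⟨h₀, hh₀t⟩ with hh₀'
  -- root spaces lie in single graded pieces
  have hrootle : ∀ (β : LieModule.Weight ℂ t L) (m : ℤ), (β : t → ℂ) h₀' = (m : ℂ) →
      (rootSpace t β : LieSubmodule ℂ t L).toSubmodule ≤ G m := by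
    intro β m hcond x hxr
    have hxeig : ⁅h₀, x⁆ = (β : t → ℂ) h₀' • x :=
      LieAlgebra.IsKilling.lie_eq_smul_of_mem_rootSpace hxr h₀'
    rw [hcond] at hxeig
    rcases eigen_comp_top hdec h₀ hgrad hxeig with h | ⟨m', hm', hxG⟩
    · rw [h]; exact (G m).zero_mem
    · rwa [Int.cast_injective (α := ℂ) hm'] at hxG
  -- the weight-space refinement of the grading
  have hAeq : ∀ m : ℤ,
      (⨆ (β : LieModule.Weight ℂ t L) (_ : (β : t → ℂ) h₀' = (m : ℂ)),
        (rootSpace t β : LieSubmodule ℂ t L).toSubmodule) = G m := by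
    refine refine_eq hdec.submodule_iSupIndep (fun m => iSup₂_le fun β hcond => hrootle β m hcond) ?_
    rw [eq_top_iff]
    have h1 : (⊤ : LieSubmodule ℂ t L).toSubmodule = ⊤ := rfl
    rw [← h1, ← LieModule.iSup_genWeightSpace_eq_top' ℂ t L]
    rw [LieSubmodule.iSup_toSubmodule]
    refine iSup_le fun β => ?_
    obtain ⟨x₀, hx₀, hx₀0⟩ := exists_ne_zero_mem (S := (rootSpace t β).toSubmodule)
      (by
        intro h
        apply β.genWeightSpace_ne_bot
        rw [← LieSubmodule.toSubmodule_inj]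
        simpa using h)
    have hxeig : ⁅h₀, x₀⁆ = (β : t → ℂ) h₀' • x₀ :=
      LieAlgebra.IsKilling.lie_eq_smul_of_mem_rootSpace hx₀ h₀'
    rcases eigen_comp_top hdec h₀ hgrad hxeig with h | ⟨m, hm, -⟩
    · exact absurd h hx₀0
    refine le_trans ?_ (le_iSup _ m)
    exact le_iSup₂ (f := fun (β : LieModule.Weight ℂ t L)
      (_ : (β : t → ℂ) h₀' = (m : ℂ)) => (rootSpace t β : LieSubmodule ℂ t L).toSubmodule)
      β hm.symm
  -- extract a weight vector in S
  obtain ⟨v₀, hv₀S, hv₀⟩ := exists_ne_zero_mem hSne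
  set S' : LieSubmodule ℂ t L :=
    { S with
      lie_mem := fun {h m} hm => by
        have hhK : (h : L) ∈ (⨆ i : ℤ, G ((k : ℤ) * i) : Submodule ℂ L) := by
          have h0 : (h : L) ∈ G ((k : ℤ) * 0) := by
            rw [mul_zero]; exact ht0 h.2
          exact le_iSup (fun i : ℤ => G ((k : ℤ) * i)) 0 h0
        exact hS2 m hm _ hhK } with hS'
  have hex : ∃ χ : t → ℂ, LieModule.genWeightSpace S' χ ≠ ⊥ := by
    by_contra hall
    push_neg at hall
    have htop' := LieModule.iSup_genWeightSpace_eq_top ℂ t S'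
    have hbot : (⊤ : LieSubmodule ℂ t S') = ⊥ := by
      rw [← htop']
      simp [hall]
    have hz : (⟨v₀, hv₀S⟩ : S') = 0 := by
      have hmem : (⟨v₀, hv₀S⟩ : S') ∈ (⊤ : LieSubmodule ℂ t S') := trivial
      rw [hbot] at hmem
      exact (LieSubmodule.mem_bot _).mp hmem
    exact hv₀ (by simpa using congrArg Subtype.val hz)
  obtain ⟨χ, hχ⟩ := hex
  obtain ⟨u, huW, hu0⟩ : ∃ u : S', u ∈ LieModule.genWeightSpace S' χ ∧ u ≠ 0 := by
    obtain ⟨u, hu, hu0⟩ := exists_ne_zero_mem (S := (LieModule.genWeightSpace S' χ).toSubmodule)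
      (by
        intro h
        apply hχ
        rw [← LieSubmodule.toSubmodule_inj]
        simpa using h)
    exact ⟨u, hu, hu0⟩
  have hvS : (u : L) ∈ S := u.2
  have hv0 : (u : L) ≠ 0 := fun h => hu0 (by
    apply Subtype.ext
    exact h)
  have hvr : (u : L) ∈ rootSpace t χ := by
    have hle := LieModule.map_genWeightSpace_le (S'.incl) (χ := χ)
    apply hle
    rw [LieSubmodule.mem_map]
    exact ⟨u, huW, rfl⟩
  set v : L := (u : L) with hvdef
  by_cases hχ0 : χ = 0
  · -- zero weight : v lies in the Cartan subalgebra
    have hvt : v ∈ t := by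
      have h1 : v ∈ (rootSpace t (0 : t → ℂ) : LieSubmodule ℂ t L) := hχ0 ▸ hvr
      have h2 : v ∈ (LieAlgebra.zeroRootSubalgebra ℂ L t).toSubmodule := by
        rw [LieAlgebra.coe_zeroRootSubalgebra]
        exact h1
      rwa [LieAlgebra.zeroRootSubalgebra_eq_of_is_cartan ℂ L t] at h2
    have clubs : ∀ (β : t → ℂ) (x : L), x ∈ rootSpace t β →
        x ∈ (⨆ i : ℤ, G ((k : ℤ) * i) : Submodule ℂ L) → ⁅v, x⁆ = 0 := by
      intro β x hxr hxK
      have hxeig : ⁅v, x⁆ = β ⟨v, hvt⟩ • x :=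
        LieAlgebra.IsKilling.lie_eq_smul_of_mem_rootSpace hxr ⟨v, hvt⟩
      by_cases hb : β ⟨v, hvt⟩ = 0
      · rw [hxeig, hb, zero_smul]
      · have hvxS : ⁅v, x⁆ ∈ S := by
          have h1 := hS2 v hvS x hxK
          rw [show ⁅v, x⁆ = -⁅x, v⁆ by rw [lie_skew]]
          exact S.neg_mem h1
        have hxS : x ∈ S := by
          have h2 : x = (β ⟨v, hvt⟩)⁻¹ • ⁅v, x⁆ := by
            rw [hxeig, smul_smul, inv_mul_cancel₀ hb, one_smul]
          rw [h2]; exact S.smul_mem _ hvxS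
        have hβ0 : β ≠ 0 := fun hbz => hb (by rw [hbz]; rfl)
        have hxz := killerNZ hdec hh₀t hgrad k S hSK hS2 hS3 hβ0 hxS hxr
        rw [hxz, lie_zero]
    have hvker : ∀ m : ℤ, ∀ y ∈ G ((k : ℤ) * m), ⁅v, y⁆ = 0 := by
      intro m y hy
      have hyA : y ∈ (⨆ (β : LieModule.Weight ℂ t L)
          (_ : (β : t → ℂ) h₀' = (((k : ℤ) * m : ℤ) : ℂ)),
          (rootSpace t β : LieSubmodule ℂ t L).toSubmodule) := by
        rw [hAeq]; exact hy
      have hker : (⨆ (β : LieModule.Weight ℂ t L)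
          (_ : (β : t → ℂ) h₀' = (((k : ℤ) * m : ℤ) : ℂ)),
          (rootSpace t β : LieSubmodule ℂ t L).toSubmodule)
          ≤ LinearMap.ker (LieAlgebra.ad ℂ L v) := by
        refine iSup₂_le fun β hcond => ?_
        intro x hxr
        rw [LinearMap.mem_ker, LieAlgebra.ad_apply]
        refine clubs β x hxr ?_
        exact le_iSup (fun i : ℤ => G ((k : ℤ) * i)) m (hrootle β _ hcond hxr)
      have hm := hker hyA
      rwa [LinearMap.mem_ker, LieAlgebra.ad_apply] at hm
    have hvG0 : ∀ y ∈ G 0, ⁅v, y⁆ = 0 := by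
      intro y hy
      exact hvker 0 y (by rwa [mul_zero])
    obtain ⟨c, hc⟩ := hcen v (ht0 hvt) hvG0
    have hc0 : c ≠ 0 := fun h => hv0 (by rw [hvdef] at hc ⊢; rw [hc, h, zero_smul])
    obtain ⟨x, hxG, hx0⟩ := exists_ne_zero_mem hGk
    have hvx : ⁅v, x⁆ = 0 := hvker 1 x (by rwa [mul_one])
    have hvx2 : ⁅v, x⁆ = (c * (k : ℂ)) • x := by
      rw [hc, smul_lie, hgrad (k : ℤ) x hxG, smul_smul]
      norm_num
    rw [hvx] at hvx2
    rcases smul_eq_zero.mp hvx2.symm with h | h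
    · rcases mul_eq_zero.mp h with h | h
      · exact hc0 h
      · exact (Nat.cast_ne_zero (R := ℂ)).mpr (by omega) h
    · exact hx0 h
  · exact hv0 (killerNZ hdec hh₀t hgrad k S hSK hS2 hS3 hχ0 hvS hvr)

end GkAux

/-- Let `g = ⊕ᵢ g(i)` be the `ℤ`-grading of a complex simple Lie
algebra induced by a simple root (so `g(0)` is a maximal Levi subalgebra whose
one-dimensional centre is spanned by a grading element `h₀`, acting on `g(i)` with
eigenvalue `i`, and the grading is generated by the degree `±1` parts).  For `k ≥ 1`,
the subalgebra `g^[k] = ⊕ᵢ g(k·i)` is semisimple, and its root spaces relative to the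
common Cartan subalgebra `t ⊆ g(0)` are exactly the root spaces of `g` lying in the
pieces `g(k·i)`, i.e. its root system is `⊔ᵢ Δ_α(k·i)`. -/
theorem gk_semisimple_and_roots
    (L : Type*) [LieRing L] [LieAlgebra ℂ L] [FiniteDimensional ℂ L]
    [LieAlgebra.IsSimple ℂ L]
    (G : ℤ → Submodule ℂ L)
    (hdec : DirectSum.IsInternal G)
    (hbr : ∀ i j : ℤ, ∀ x ∈ G i, ∀ y ∈ G j, ⁅x, y⁆ ∈ G (i + j))
    (t : LieSubalgebra ℂ L) [t.IsCartanSubalgebra]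
    (ht0 : t.toSubmodule ≤ G 0)
    (h₀ : L) (hh₀t : h₀ ∈ t)
    (hgrad : ∀ i : ℤ, ∀ x ∈ G i, ⁅h₀, x⁆ = (i : ℂ) • x)
    (hcen : ∀ x ∈ G 0, (∀ y ∈ G 0, ⁅x, y⁆ = 0) → ∃ c : ℂ, x = c • h₀)
    (hgenpos : ∀ i : ℤ, 1 ≤ i →
      G (i + 1) = Submodule.span ℂ {z : L | ∃ x ∈ G 1, ∃ y ∈ G i, ⁅x, y⁆ = z})
    (hgenneg : ∀ i : ℤ, i ≤ -1 →
      G (i - 1) = Submodule.span ℂ {z : L | ∃ x ∈ G (-1), ∃ y ∈ G i, ⁅x, y⁆ = z})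
    (k : ℕ) (hk : 1 ≤ k) (hGk : G (k : ℤ) ≠ ⊥)
    (K : LieSubalgebra ℂ L)
    (hK : K.toSubmodule = ⨆ i : ℤ, G ((k : ℤ) * i)) :
    LieAlgebra.IsSemisimple ℂ K ∧
    ∀ χ : t → ℂ, χ ≠ 0 →
      ((∃ x : L, x ≠ 0 ∧ x ∈ K ∧ ∀ h : t, ⁅(h : L), x⁆ = χ h • x) ↔
       (∃ i : ℤ, ∃ x : L, x ≠ 0 ∧ x ∈ G ((k : ℤ) * i) ∧
          ∀ h : t, ⁅(h : L), x⁆ = χ h • x)) := by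
  classical
  have hkC : ((k : ℤ) : ℂ) ≠ 0 := by
    exact_mod_cast (by omega : (k : ℤ) ≠ 0)
  haveI hKill : LieAlgebra.IsKilling ℂ L :=
    GkAux.isKilling h₀ (GkAux.killing_h0_ne hdec h₀ hgrad (k : ℤ) (by omega) hGk)
  -- membership translation for K
  have hmemK : ∀ x : L, x ∈ K ↔ x ∈ (⨆ i : ℤ, G ((k : ℤ) * i) : Submodule ℂ L) := by
    intro x
    rw [← hK]
    rfl
  constructor
  · -- semisimplicity
    set Φ : LinearMap.BilinForm ℂ K :=
      (killingForm ℂ L).compl₁₂ K.incl.toLinearMap K.incl.toLinearMap with hΦ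
    have hΦ_apply : ∀ x y : K, Φ x y = killingForm ℂ L (x : L) (y : L) := fun x y => rfl
    have hnd : Φ.Nondegenerate := by
      refine LinearMap.BilinForm.Nondegenerate.ofSeparatingLeft ?_
      intro x hx
      by_contra hx0
      have hx0' : (x : L) ≠ 0 := fun h => hx0 (Subtype.ext h)
      have hxK : (x : L) ∈ (⨆ i : ℤ, G ((k : ℤ) * i) : Submodule ℂ L) :=
        (hmemK _).mp x.2
      -- there is some w with κ x w ≠ 0
      obtain ⟨w, hw⟩ : ∃ w : L, killingForm ℂ L (x : L) w ≠ 0 := by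
        by_contra hall
        push_neg at hall
        have : (x : L) ∈ LinearMap.ker (killingForm ℂ L) := by
          rw [LinearMap.mem_ker]
          ext w
          simpa using hall w
        rw [LieAlgebra.IsKilling.ker_killingForm_eq_bot] at this
        exact hx0' ((Submodule.mem_bot ℂ).mp this)
      -- decompose w into graded components
      have hwtop : w ∈ (⨆ j : ℤ, G j : Submodule ℂ L) := by
        rw [hdec.submodule_iSup_eq_top]; trivial
      rw [Submodule.mem_iSup_iff_exists_finsupp] at hwtop
      obtain ⟨f, hf, hsum⟩ := hwtop
      rw [Finsupp.sum] at hsum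
      have hsum2 : killingForm ℂ L (x : L) w
          = ∑ j ∈ f.support, killingForm ℂ L (x : L) (f j) := by
        rw [← hsum, map_sum]
      have hex : ∃ j ∈ f.support, killingForm ℂ L (x : L) (f j) ≠ 0 := by
        by_contra hall
        push_neg at hall
        rw [hsum2, Finset.sum_eq_zero hall] at hw
        exact hw rfl
      obtain ⟨j, -, hj⟩ := hex
      -- the component must pair, so k ∣ j
      have hpair : ∃ i : ℤ, (k : ℤ) * i + j = 0 := by
        by_contra hno
        push_neg at hno
        apply hj
        have hxker : (x : L) ∈ LinearMap.ker ((killingForm ℂ L).flip (f j)) := by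
          refine (iSup_le fun i => ?_ : (⨆ i : ℤ, G ((k : ℤ) * i) : Submodule ℂ L)
            ≤ LinearMap.ker ((killingForm ℂ L).flip (f j))) hxK
          intro z hz
          rw [LinearMap.mem_ker]
          show killingForm ℂ L z (f j) = 0
          exact GkAux.killing_pair hdec hbr (hno i) hz (hf j)
        simpa using hxker
      obtain ⟨i, hi⟩ := hpair
      have hfjG : f j ∈ G ((k : ℤ) * (-i)) := by
        have : j = (k : ℤ) * (-i) := by
          have := hi
          ring_nf
          omega
        exact this ▸ hf j
      have hfjK : f j ∈ K := by
        rw [hmemK]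
        exact le_iSup (fun i : ℤ => G ((k : ℤ) * i)) (-i) hfjG
      exact hj (hx ⟨f j, hfjK⟩)
    have hinv : Φ.lieInvariant K := by
      intro x y z
      have h1 := LieModule.traceForm_lieInvariant ℂ L L (x : L) (y : L) (z : L)
      simpa [hΦ_apply, LieSubalgebra.coe_bracket] using h1
    have hrefl : Φ.IsRefl := by
      refine LinearMap.IsSymm.isRefl ?_
      rw [LinearMap.isSymm_def]
      intro x y
      simpa [hΦ_apply] using LieModule.traceForm_comm ℂ L L (x : L) (y : L)
    have hL : ∀ I : LieIdeal ℂ K, IsAtom I → ¬IsLieAbelian I := by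
      intro I hatom hab
      -- image of I in L
      set S : Submodule ℂ L := Submodule.map K.incl.toLinearMap I.toSubmodule with hSdef
      have hmemS : ∀ z : L, z ∈ S ↔ ∃ z' : K, z' ∈ I ∧ (z' : L) = z := by
        intro z
        rw [hSdef]
        simp [Submodule.mem_map]
      have hSK : S ≤ ⨆ i : ℤ, G ((k : ℤ) * i) := by
        intro z hz
        obtain ⟨z', -, rfl⟩ := (hmemS z).mp hz
        exact (hmemK _).mp z'.2
      have hS2 : ∀ x ∈ S, ∀ y, y ∈ (⨆ i : ℤ, G ((k : ℤ) * i) : Submodule ℂ L)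
          → ⁅y, x⁆ ∈ S := by
        intro x hx y hy
        obtain ⟨x', hx'I, rfl⟩ := (hmemS x).mp hx
        have hyK : y ∈ K := (hmemK y).mpr hy
        have hbr' : ⁅(⟨y, hyK⟩ : K), x'⁆ ∈ I := I.lie_mem hx'I
        rw [hmemS]
        exact ⟨⁅(⟨y, hyK⟩ : K), x'⁆, hbr', rfl⟩
      have hS3 : ∀ x ∈ S, ∀ y ∈ S, ⁅x, y⁆ = 0 := by
        intro x hx y hy
        obtain ⟨x', hx'I, rfl⟩ := (hmemS x).mp hx
        obtain ⟨y', hy'I, rfl⟩ := (hmemS y).mp hy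
        have h0 : ⁅(⟨x', hx'I⟩ : I), (⟨y', hy'I⟩ : I)⁆ = 0 := trivial_lie_zero _ _ _ _
        have h1 : ⁅x', y'⁆ = (0 : K) := by
          have := congrArg I.incl h0
          rwa [LieHom.map_lie, map_zero] at this
        calc ⁅(x' : L), (y' : L)⁆ = ((⁅x', y'⁆ : K) : L) := rfl
          _ = ((0 : K) : L) := by rw [h1]
          _ = 0 := rfl
      have hSne : S ≠ ⊥ := by
        have hIne : I.toSubmodule ≠ ⊥ := by
          intro h
          apply hatom.1
          rw [← LieSubmodule.toSubmodule_inj]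
          simpa using h
        obtain ⟨a, haI, ha0⟩ := GkAux.exists_ne_zero_mem hIne
        intro h
        have : (a : L) ∈ S := (hmemS _).mpr ⟨a, haI, rfl⟩
        rw [h] at this
        exact ha0 (Subtype.ext ((Submodule.mem_bot ℂ).mp this))
      exact GkAux.no_abelian hdec ht0 hh₀t hgrad hcen k hk hGk S hSK hS2 hS3 hSne
    exact LieAlgebra.InvariantForm.isSemisimple_of_nondegenerate Φ hnd hinv hrefl hL
  · -- root space correspondence
    intro χ hχ
    constructor
    · rintro ⟨x, hx0, hxK, hxeig⟩
      have hxe : ⁅h₀, x⁆ = χ ⟨h₀, hh₀t⟩ • x := hxeig ⟨h₀, hh₀t⟩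
      rcases GkAux.eigen_comp_k hdec h₀ hgrad (k : ℤ) ((hmemK x).mp hxK) hxe with
        h | ⟨i, -, hxG⟩
      · exact absurd h hx0
      · exact ⟨i, x, hx0, hxG, hxeig⟩
    · rintro ⟨i, x, hx0, hxG, hxeig⟩
      refine ⟨x, hx0, ?_, hxeig⟩
      rw [hmemK]
      exact le_iSup (fun i : ℤ => G ((k : ℤ) * i)) i hxG
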